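/- Localization of a forest is a forest: if Δ is a forest on vertex set V and W ⊆ V, then the simplicial complex whose facets are the maximal elements of {F ∩ W : F facet of Δ, F ∩ W ≠ ∅} is a forest. -/
import Mathlib


open Finset

variable {α : Type*} [DecidableEq α]

/-- A set of vertices meeting every facet. -/
def IsVertexCover (Δ : Finset (Finset α)) (A : Finset α) : Prop :=
  ∀ F ∈ Δ, (A ∩ F).Nonempty

/-- A vertex cover none of whose proper subsets is a cover. -/
def IsMinimalVertexCover (Δ : Finset (Finset α)) (A : Finset α) : Prop :=
  IsVertexCover Δ A ∧ ∀ B ⊆ A, IsVertexCover Δ B → B = A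

/-- The vertex covering number α(Δ). -/
noncomputable def coverNum (Δ : Finset (Finset α)) : ℕ :=
  sInf {n | ∃ A : Finset α, IsVertexCover Δ A ∧ A.card = n}

/-- All minimal vertex covers have the same cardinality. -/
def Unmixed (Δ : Finset (Finset α)) : Prop :=
  ∀ A B : Finset α, IsMinimalVertexCover Δ A → IsMinimalVertexCover Δ B →
    A.card = B.card

/-- `F` is a leaf of `Δ`: it is the only facet, or some facet `G ≠ F`
satisfies `F ∩ F' ⊆ F ∩ G` for every facet `F' ≠ F`. -/
def IsLeaf (Δ : Finset (Finset α)) (F : Finset α) : Prop :=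
  F ∈ Δ ∧ (Δ = {F} ∨ ∃ G ∈ Δ, G ≠ F ∧ ∀ F' ∈ Δ, F' ≠ F → F ∩ F' ⊆ F ∩ G)

/-- `G` is a joint of the leaf `F` in `Δ`. -/
def IsJoint (Δ : Finset (Finset α)) (G F : Finset α) : Prop :=
  F ∈ Δ ∧ G ∈ Δ ∧ G ≠ F ∧ (∀ F' ∈ Δ, F' ≠ F → F ∩ F' ⊆ F ∩ G) ∧
    (F ∩ G).Nonempty

def HasLeaf (Δ : Finset (Finset α)) : Prop := ∃ F, IsLeaf Δ F

/-- Every nonempty subcollection has a leaf. -/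
def IsForest (Δ : Finset (Finset α)) : Prop :=
  ∀ Γ ⊆ Δ, Γ.Nonempty → HasLeaf Γ

/-- Any two facets are linked by a chain of facets with consecutive
nonempty intersections. -/
def ComplexConnected (Δ : Finset (Finset α)) : Prop :=
  ∀ F ∈ Δ, ∀ G ∈ Δ,
    Relation.ReflTransGen (fun A B => A ∈ Δ ∧ B ∈ Δ ∧ (A ∩ B).Nonempty) F G

def IsTree (Δ : Finset (Finset α)) : Prop := ComplexConnected Δ ∧ IsForest Δ

/-- An independent (pairwise disjoint) set of facets of `Δ`. -/
def IndependentFacets (Δ S : Finset (Finset α)) : Prop :=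
  S ⊆ Δ ∧ ∀ F ∈ S, ∀ G ∈ S, F ≠ G → F ∩ G = ∅

/-- The independence number β(Δ). -/
noncomputable def indepNum (Δ : Finset (Finset α)) : ℕ :=
  sSup {n | ∃ S : Finset (Finset α), IndependentFacets Δ S ∧ S.card = n}

/-- An independent set of facets not properly contained in another. -/
def MaximalIndependent (Δ S : Finset (Finset α)) : Prop :=
  IndependentFacets Δ S ∧ ∀ T, IndependentFacets Δ T → S ⊆ T → T = S

/-- `v` is a free vertex of the facet `F`: it belongs to no other facet. -/
def FreeVertex (Δ : Finset (Finset α)) (v : α) (F : Finset α) : Prop :=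
  F ∈ Δ ∧ v ∈ F ∧ ∀ G ∈ Δ, v ∈ G → G = F

/-- The facets form an antichain (they are the maximal faces). -/
def FacetAntichain (Δ : Finset (Finset α)) : Prop :=
  ∀ F ∈ Δ, ∀ G ∈ Δ, F ⊆ G → F = G

/-- The localization of `Δ` at a vertex set `W`: the inclusion-maximal sets
among the nonempty intersections `F ∩ W` over facets `F` of `Δ`. -/
def localize (Δ : Finset (Finset α)) (W : Finset α) : Finset (Finset α) :=
  let S := (Δ.image (· ∩ W)).filter fun F => F.Nonempty
  S.filter fun F => ∀ G ∈ S, F ⊆ G → F = G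

/-- Localization of a forest is a forest. -/
theorem localization_of_forest_is_forest (Δ : Finset (Finset α))
    (hforest : IsForest Δ) (W : Finset α) :
    IsForest (localize Δ W) := by
  classical
  intro Γ hΓ hne
  have hrep : ∀ H ∈ Γ, ∃ F ∈ Δ, F ∩ W = H := by
    intro H hH
    have hmem := hΓ hH
    simp only [localize, Finset.mem_filter, Finset.mem_image] at hmem
    obtain ⟨⟨⟨F, hF, hFW⟩, -⟩, -⟩ := hmem
    exact ⟨F, hF, hFW⟩
  choose f hf hfW using hrep
  set Δ₀ : Finset (Finset α) := Γ.attach.image (fun H => f H.1 H.2) with hΔ₀def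
  have hΔ₀sub : Δ₀ ⊆ Δ := by
    intro F hF
    simp only [hΔ₀def, Finset.mem_image, Finset.mem_attach, true_and,
      Subtype.exists] at hF
    obtain ⟨H, hH, rfl⟩ := hF
    exact hf H hH
  have hΔ₀ne : Δ₀.Nonempty := by
    obtain ⟨H, hH⟩ := hne
    exact ⟨f H hH, Finset.mem_image.mpr ⟨⟨H, hH⟩, Finset.mem_attach _ _, rfl⟩⟩
  obtain ⟨F, hFmem, hleaf⟩ := hforest Δ₀ hΔ₀sub hΔ₀ne
  obtain ⟨H₀, hH₀, hFeq⟩ : ∃ H₀, ∃ hH₀ : H₀ ∈ Γ, f H₀ hH₀ = F := by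
    simp only [hΔ₀def, Finset.mem_image, Finset.mem_attach, true_and,
      Subtype.exists] at hFmem
    exact hFmem
  have hFW0 : F ∩ W = H₀ := hFeq ▸ hfW H₀ hH₀
  refine ⟨H₀, hH₀, ?_⟩
  rcases hleaf with heq | ⟨G, hGmem, hGF, hjoint⟩
  · left
    apply Finset.eq_singleton_iff_nonempty_unique_mem.mpr
    refine ⟨⟨H₀, hH₀⟩, fun H hH => ?_⟩
    have : f H hH ∈ Δ₀ := Finset.mem_image.mpr ⟨⟨H, hH⟩, Finset.mem_attach _ _, rfl⟩
    rw [heq, Finset.mem_singleton] at this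
    rw [← hfW H hH, this, hFW0]
  · right
    obtain ⟨H₁, hH₁, hGeq⟩ : ∃ H₁, ∃ hH₁ : H₁ ∈ Γ, f H₁ hH₁ = G := by
      simp only [hΔ₀def, Finset.mem_image, Finset.mem_attach, true_and,
        Subtype.exists] at hGmem
      exact hGmem
    have hGW1 : G ∩ W = H₁ := hGeq ▸ hfW H₁ hH₁
    have hne01 : H₁ ≠ H₀ := by
      intro h
      subst h
      exact hGF (hGeq ▸ hFeq ▸ rfl)
    refine ⟨H₁, hH₁, hne01, fun H hH hHne => ?_⟩
    have hfne : f H hH ≠ F := by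
      intro h
      apply hHne
      rw [← hfW H hH, h, hFW0]
    have hsub : F ∩ f H hH ⊆ F ∩ G := by
      apply hjoint
      · exact Finset.mem_image.mpr ⟨⟨H, hH⟩, Finset.mem_attach _ _, rfl⟩
      · exact hfne
    intro x hx
    rw [← hFW0, ← hfW H hH] at hx
    simp only [Finset.mem_inter] at hx ⊢
    have : x ∈ F ∩ G := hsub (Finset.mem_inter.mpr ⟨hx.1.1, hx.2.1⟩)
    rw [Finset.mem_inter] at this
    rw [← hFW0, ← hGW1]
    simp only [Finset.mem_inter]
    exact ⟨⟨this.1, hx.1.2⟩, this.2, hx.1.2⟩
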